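/- For the 5-by-5 matrix A = [[0,0,1,0,0],[0,0,0,b,tc],[0,0,0,c,−tb],[0,0,0,0,s],[0,0,0,0,0]] with b,c,s,t ≥ 0, s²+t²=1, b²+c²=1, and for any real θ, the characteristic polynomial of Re(e^{−iθ}A) equals −λ⁵ + (3/4)λ³ − (1/16)(c²t² + b² + 1)λ − (1/16) b c s t cos θ. -/

import Mathlib

open Matrix

set_option maxHeartbeats 2000000 in
open Polynomial in
theorem kippenhahn_poly_5x5 (b c s t θ : ℝ)
    (hb : 0 ≤ b) (hc : 0 ≤ c) (hs : 0 ≤ s) (ht : 0 ≤ t)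
    (hst : s ^ 2 + t ^ 2 = 1) (hbc : b ^ 2 + c ^ 2 = 1) :
    let A : Matrix (Fin 5) (Fin 5) ℂ :=
      !![0, 0, 1, 0, 0;
         0, 0, 0, (b : ℂ), ((t * c : ℝ) : ℂ);
         0, 0, 0, (c : ℂ), ((-(t * b) : ℝ) : ℂ);
         0, 0, 0, 0, (s : ℂ);
         0, 0, 0, 0, 0]
    let M : Matrix (Fin 5) (Fin 5) ℂ :=
      (1 / 2 : ℂ) • (Complex.exp (-(θ : ℂ) * Complex.I) • A +
        (Complex.exp (-(θ : ℂ) * Complex.I) • A)ᴴ)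
    Eq (-M.charpoly)
      (-X ^ 5 + C (3 / 4 : ℂ) * X ^ 3
        - C (((1 / 16 * (c ^ 2 * t ^ 2 + b ^ 2 + 1) : ℝ)) : ℂ) * X
        - C (((1 / 16 * (b * c * s * t * Real.cos θ) : ℝ)) : ℂ)) := by
  intro A M
  set u := Complex.exp (-(θ : ℂ) * Complex.I) with hu
  set w := Complex.exp ((θ : ℂ) * Complex.I) with hw
  have hconj : (starRingEnd ℂ) u = w := by
    rw [hu, hw, ← Complex.exp_conj]
    congr 1
    simp [_root_.map_mul, Complex.conj_I]
  have h1 : u * w = 1 := by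
    rw [hu, hw, ← Complex.exp_add]
    ring_nf
    exact Complex.exp_zero
  have h2 : u + w = 2 * ((Real.cos θ : ℝ) : ℂ) := by
    rw [Complex.ofReal_cos, hu, hw,
      show -(θ : ℂ) * Complex.I = (-θ : ℂ) * Complex.I by ring,
      Complex.exp_mul_I, Complex.exp_mul_I, Complex.cos_neg, Complex.sin_neg]
    ring
  have h3 : (b : ℂ) ^ 2 + (c : ℂ) ^ 2 = 1 := by exact_mod_cast hbc
  have h4 : (s : ℂ) ^ 2 + (t : ℂ) ^ 2 = 1 := by exact_mod_cast hst
  have hu' : Complex.exp (-((θ : ℂ) * Complex.I)) = u := by rw [hu]; ring_nf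
  have hM : M = !![0, 0, u/2, 0, 0;
      0, 0, 0, u*(b:ℂ)/2, u*(t:ℂ)*(c:ℂ)/2;
      w/2, 0, 0, u*(c:ℂ)/2, -(u*(t:ℂ)*(b:ℂ)/2);
      0, w*(b:ℂ)/2, w*(c:ℂ)/2, 0, u*(s:ℂ)/2;
      0, w*(t:ℂ)*(c:ℂ)/2, -(w*(t:ℂ)*(b:ℂ)/2), w*(s:ℂ)/2, 0] := by
    ext i j
    fin_cases i <;> fin_cases j <;>
      simp [M, A, Matrix.smul_apply, Matrix.add_apply, Matrix.conjTranspose_apply,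
        hconj, hu', _root_.map_mul, Complex.conj_ofReal, Matrix.vecHead, Matrix.vecTail] <;> try ring
  refine Polynomial.funext fun x => ?_
  have hdet : Polynomial.eval x M.charpoly =
      Matrix.det !![(x:ℂ), 0, -(u/2), 0, 0;
        0, x, 0, -(u*(b:ℂ)/2), -(u*(t:ℂ)*(c:ℂ)/2);
        -(w/2), 0, x, -(u*(c:ℂ)/2), u*(t:ℂ)*(b:ℂ)/2;
        0, -(w*(b:ℂ)/2), -(w*(c:ℂ)/2), x, -(u*(s:ℂ)/2);
        0, -(w*(t:ℂ)*(c:ℂ)/2), w*(t:ℂ)*(b:ℂ)/2, -(w*(s:ℂ)/2), x] := by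
    rw [Matrix.charpoly, ← Polynomial.coe_evalRingHom, RingHom.map_det]
    congr 1
    ext i j
    fin_cases i <;> fin_cases j <;>
      simp [hM, Matrix.charmatrix_apply_eq, Matrix.charmatrix_apply_ne, Matrix.map_apply,
        RingHom.mapMatrix_apply, Matrix.vecHead, Matrix.vecTail]
  rw [Polynomial.eval_neg, hdet]
  simp only [Polynomial.eval_add, Polynomial.eval_mul, Polynomial.eval_sub,
    Polynomial.eval_neg, Polynomial.eval_pow, Polynomial.eval_X, Polynomial.eval_C]
  simp -failIfUnchanged [Matrix.det_succ_row_zero, Fin.sum_univ_succ, Fin.succAbove,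
    Fin.castSucc, Fin.castAdd, Fin.castLE, Matrix.cons_val', Matrix.vecHead, Matrix.vecTail]
  push_cast [← Complex.ofReal_cos]
  linear_combination (norm := ring)
    (-((1/32:ℂ)*b*c*s*t*(w + u + u*w^2 + u^2*w)
       + (1/16:ℂ)*x*((s:ℂ)^2 + c^2*t^2 + c^4*t^2 + b^2 + 2*b^2*c^2*t^2 + b^4*t^2)*(1 + u*w)
       - (1/4:ℂ)*x^3*(1 + (s:ℂ)^2 + c^2 + c^2*t^2 + b^2 + b^2*t^2))) * h1
    + (-((1/32:ℂ)*b*c*s*t)) * h2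
    + (-((1/16:ℂ)*x*(1 + (t:ℂ)^2 + c^2*t^2 + b^2*t^2) - (1/4:ℂ)*x^3*(1+(t:ℂ)^2) - (1/16:ℂ)*x)) * h3
    + (-((1/16:ℂ)*x - (1/4:ℂ)*x^3)) * h4
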